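/- Let x, a, b : [0,∞) → [0,∞) be continuous functions with x differentiable on (0,∞) and x'(t) ≤ a(t) x(t) + b(t) for all t > 0. Suppose there exist r > 0, t₀ ≥ 0, and constants X, A, B ≥ 0 such that for all t ≥ t₀: ∫_t^{t+r} x(s) ds ≤ X, ∫_t^{t+r} a(s) ds ≤ A, and ∫_t^{t+r} b(s) ds ≤ B. Then for all t ≥ t₀ + r, x(t) ≤ (X/r + B) e^A. -/

import Mathlib

open MeasureTheory


lemma gron_aux (x a b x' : ℝ → ℝ)
    (hxc : ContinuousOn x (Set.Ici 0)) (hac : ContinuousOn a (Set.Ici 0))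
    (hbc : ContinuousOn b (Set.Ici 0))
    (hann : ∀ t, 0 ≤ t → 0 ≤ a t)
    (hbnn : ∀ t, 0 ≤ t → 0 ≤ b t)
    (hderiv : ∀ t, 0 < t → HasDerivAt x (x' t) t)
    (hineq : ∀ t, 0 < t → x' t ≤ a t * x t + b t)
    (s t : ℝ) (hs : 0 < s) (hst : s ≤ t) :
    x t ≤ (x s + ∫ u in s..t, b u) * Real.exp (∫ u in s..t, a u) := by
  have haoi : ContinuousOn a (Set.Ioi 0) := hac.mono (Set.Ioi_subset_Ici le_rfl)
  have hboi : ContinuousOn b (Set.Ioi 0) := hbc.mono (Set.Ioi_subset_Ici le_rfl)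
  set I : ℝ → ℝ := fun u => ∫ v in s..u, a v with hI
  set J : ℝ → ℝ := fun u => ∫ v in s..u, b v with hJ
  set F : ℝ → ℝ := fun u => x u * Real.exp (-(I u)) - J u with hF
  have hsub : ∀ u, s ≤ u → Set.uIcc s u ⊆ Set.Ici 0 := by
    intro u hu
    rw [Set.uIcc_of_le hu]
    exact fun v hv => le_trans hs.le hv.1
  have haint : ∀ u, s ≤ u → IntervalIntegrable a volume s u := fun u hu =>
    (hac.mono (hsub u hu)).intervalIntegrable
  have hbint : ∀ u, s ≤ u → IntervalIntegrable b volume s u := fun u hu =>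
    (hbc.mono (hsub u hu)).intervalIntegrable
  have hFd : ∀ u ∈ Set.Icc s t,
      HasDerivAt F ((x' u - a u * x u) * Real.exp (-(I u)) - b u) u := by
    intro u hu
    have hu0 : 0 < u := lt_of_lt_of_le hs hu.1
    have hIu : HasDerivAt I (a u) u :=
      intervalIntegral.integral_hasDerivAt_right (haint u hu.1)
        (haoi.stronglyMeasurableAtFilter isOpen_Ioi u hu0) (haoi.continuousAt (Ioi_mem_nhds hu0))
    have hJu : HasDerivAt J (b u) u :=
      intervalIntegral.integral_hasDerivAt_right (hbint u hu.1)
        (hboi.stronglyMeasurableAtFilter isOpen_Ioi u hu0) (hboi.continuousAt (Ioi_mem_nhds hu0))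
    have hx : HasDerivAt x (x' u) u := hderiv u hu0
    have he : HasDerivAt (fun v => Real.exp (-(I v))) (-(a u) * Real.exp (-(I u))) u := by
      have := (hIu.neg).exp
      exact this.congr_deriv (by show Real.exp (-(I u)) * -(a u) = -(a u) * Real.exp (-(I u)); ring)
    have := (hx.mul he).sub hJu
    exact this.congr_deriv (by ring)
  have hIpos : ∀ u, s ≤ u → 0 ≤ I u := by
    intro u hu
    apply intervalIntegral.integral_nonneg hu
    intro v hv
    exact hann v (le_trans hs.le hv.1)
  have hanti : AntitoneOn F (Set.Icc s t) := by
    apply antitoneOn_of_deriv_nonpos (convex_Icc s t)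
    · exact fun u hu => (hFd u hu).continuousAt.continuousWithinAt
    · intro u hu
      rw [interior_Icc] at hu
      exact (hFd u ⟨hu.1.le, hu.2.le⟩).differentiableAt.differentiableWithinAt
    · intro u hu
      rw [interior_Icc] at hu
      have hu' : u ∈ Set.Icc s t := ⟨hu.1.le, hu.2.le⟩
      rw [(hFd u hu').deriv]
      have hu0 : 0 < u := lt_of_lt_of_le hs hu'.1
      have h1 : x' u - a u * x u ≤ b u := by linarith [hineq u hu0]
      have h2 : Real.exp (-(I u)) ≤ 1 := Real.exp_le_one_iff.mpr (by linarith [hIpos u hu'.1])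
      have h3 : 0 < Real.exp (-(I u)) := Real.exp_pos _
      have hb : 0 ≤ b u := hbnn u hu0.le
      nlinarith [mul_le_mul_of_nonneg_right h1 h3.le]
  have hFts : F t ≤ F s := hanti ⟨le_rfl, hst⟩ ⟨hst, le_rfl⟩ hst
  have hFs : F s = x s := by
    simp [hF, hI, hJ, intervalIntegral.integral_same]
  rw [hFs] at hFts
  -- F t = x t * exp(-(I t)) - J t ≤ x s
  have key : x t * Real.exp (-(I t)) ≤ x s + J t := by
    have : x t * Real.exp (-(I t)) - J t ≤ x s := hFts
    linarith
  have hexp : 0 < Real.exp (I t) := Real.exp_pos _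
  calc x t = x t * Real.exp (-(I t)) * Real.exp (I t) := by
        rw [mul_assoc, ← Real.exp_add]; simp
    _ ≤ (x s + J t) * Real.exp (I t) := mul_le_mul_of_nonneg_right key hexp.le

/-- **Uniform Grönwall Lemma.** If `x' ≤ a x + b` on `(0,∞)` with `x, a, b`
nonnegative and continuous on `[0,∞)`, and the sliding-window integrals of `x, a, b` over
intervals of length `r` are bounded by `X, A, B` for all starting times `t ≥ t₀`, then
`x(t) ≤ (X/r + B) e^A` for all `t ≥ t₀ + r`. -/
theorem uniform_gronwall (x a b x' : ℝ → ℝ)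
    (hxc : ContinuousOn x (Set.Ici 0)) (hac : ContinuousOn a (Set.Ici 0))
    (hbc : ContinuousOn b (Set.Ici 0))
    (hxnn : ∀ t, 0 ≤ t → 0 ≤ x t) (hann : ∀ t, 0 ≤ t → 0 ≤ a t)
    (hbnn : ∀ t, 0 ≤ t → 0 ≤ b t)
    (hderiv : ∀ t, 0 < t → HasDerivAt x (x' t) t)
    (hineq : ∀ t, 0 < t → x' t ≤ a t * x t + b t)
    (r : ℝ) (hr : 0 < r) (t₀ : ℝ) (ht₀ : 0 ≤ t₀)
    (X A B : ℝ)
    (hXint : ∀ t, t₀ ≤ t → ∫ s in t..(t + r), x s ≤ X)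
    (hAint : ∀ t, t₀ ≤ t → ∫ s in t..(t + r), a s ≤ A)
    (hBint : ∀ t, t₀ ≤ t → ∫ s in t..(t + r), b s ≤ B) :
    ∀ t, t₀ + r ≤ t → x t ≤ (X / r + B) * Real.exp A := by
  intro t ht
  set s₀ : ℝ := t - r with hs₀def
  have hs₀t₀ : t₀ ≤ s₀ := by simp [hs₀def]; all_goals linarith
  have hs₀nn : 0 ≤ s₀ := le_trans ht₀ hs₀t₀
  have hs₀t : s₀ ≤ t := by simp [hs₀def]; all_goals linarith
  have hs₀r : s₀ + r = t := by simp [hs₀def]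
  have hsub : Set.uIcc s₀ t ⊆ Set.Ici 0 := by
    rw [Set.uIcc_of_le hs₀t]
    exact fun v hv => le_trans hs₀nn hv.1
  have hsubIcc : Set.Icc s₀ t ⊆ Set.Ici 0 := by
    rw [← Set.uIcc_of_le hs₀t]; exact hsub
  -- pointwise estimate for s ∈ Icc s₀ t with 0 < s
  have key : ∀ s ∈ Set.Icc s₀ t, 0 < s → x t ≤ (x s + B) * Real.exp A := by
    intro s hsm hspos
    have hst : s ≤ t := hsm.2
    have hsub2 : ∀ u1 u2, s₀ ≤ u1 → u1 ≤ u2 → u2 ≤ t → Set.uIcc u1 u2 ⊆ Set.Ici 0 := by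
      intro u1 u2 h1 h2 h3
      rw [Set.uIcc_of_le h2]
      exact fun v hv => le_trans hs₀nn (le_trans h1 hv.1)
    have haint1 : IntervalIntegrable a volume s₀ s :=
      (hac.mono (hsub2 _ _ le_rfl hsm.1 hst)).intervalIntegrable
    have haint2 : IntervalIntegrable a volume s t :=
      (hac.mono (hsub2 _ _ hsm.1 hst le_rfl)).intervalIntegrable
    have hbint1 : IntervalIntegrable b volume s₀ s :=
      (hbc.mono (hsub2 _ _ le_rfl hsm.1 hst)).intervalIntegrable
    have hbint2 : IntervalIntegrable b volume s t :=
      (hbc.mono (hsub2 _ _ hsm.1 hst le_rfl)).intervalIntegrable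
    have haA : ∫ u in s..t, a u ≤ A := by
      have hsplit : (∫ u in s₀..s, a u) + ∫ u in s..t, a u = ∫ u in s₀..t, a u :=
        intervalIntegral.integral_add_adjacent_intervals haint1 haint2
      have h1 : 0 ≤ ∫ u in s₀..s, a u :=
        intervalIntegral.integral_nonneg hsm.1 (fun v hv => hann v (le_trans hs₀nn hv.1))
      have h2 : ∫ u in s₀..t, a u ≤ A := by
        have := hAint s₀ hs₀t₀; rwa [hs₀r] at this
      linarith
    have hbB : ∫ u in s..t, b u ≤ B := by
      have hsplit : (∫ u in s₀..s, b u) + ∫ u in s..t, b u = ∫ u in s₀..t, b u :=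
        intervalIntegral.integral_add_adjacent_intervals hbint1 hbint2
      have h1 : 0 ≤ ∫ u in s₀..s, b u :=
        intervalIntegral.integral_nonneg hsm.1 (fun v hv => hbnn v (le_trans hs₀nn hv.1))
      have h2 : ∫ u in s₀..t, b u ≤ B := by
        have := hBint s₀ hs₀t₀; rwa [hs₀r] at this
      linarith
    have hbnn' : 0 ≤ ∫ u in s..t, b u :=
      intervalIntegral.integral_nonneg hst
        (fun v hv => hbnn v (le_trans hs₀nn (le_trans hsm.1 hv.1)))
    have hgron := gron_aux x a b x' hxc hac hbc hann hbnn hderiv hineq s t hspos hst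
    have hxs : 0 ≤ x s := hxnn s (hsubIcc hsm)
    calc x t ≤ (x s + ∫ u in s..t, b u) * Real.exp (∫ u in s..t, a u) := hgron
      _ ≤ (x s + B) * Real.exp A := by
          apply mul_le_mul (by linarith) (Real.exp_le_exp.mpr haA) (Real.exp_pos _).le
          linarith
  -- integrate over s ∈ [s₀, t]
  have hxint : IntervalIntegrable x volume s₀ t := (hxc.mono hsub).intervalIntegrable
  have hgint : IntervalIntegrable (fun s => (x s + B) * Real.exp A) volume s₀ t :=
    (((hxc.mono hsub).add continuousOn_const).mul continuousOn_const).intervalIntegrable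
  have hae : ∀ᵐ s ∂(volume.restrict (Set.Icc s₀ t)),
      (fun _ : ℝ => x t) s ≤ (fun s => (x s + B) * Real.exp A) s := by
    have h0 : ∀ᵐ s : ℝ, s ≠ (0:ℝ) := by
      have hz : (volume : Measure ℝ) {(0:ℝ)} = 0 := Real.volume_singleton
      filter_upwards [MeasureTheory.measure_eq_zero_iff_ae_notMem.mp hz] with v hv
      simpa using hv
    filter_upwards [MeasureTheory.ae_restrict_mem measurableSet_Icc,
      MeasureTheory.ae_restrict_of_ae h0] with s hsm hs0
    exact key s hsm (lt_of_le_of_ne (hsubIcc hsm) (Ne.symm hs0))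
  have hmono := intervalIntegral.integral_mono_ae_restrict hs₀t
    (intervalIntegrable_const (c := x t)) hgint hae
  rw [intervalIntegral.integral_const] at hmono
  have hconst : (t - s₀) • x t = r * x t := by
    simp [hs₀def]; all_goals ring
  rw [hconst] at hmono
  have hsplit : ∫ s in s₀..t, (x s + B) * Real.exp A
      = ((∫ s in s₀..t, x s) + r * B) * Real.exp A := by
    rw [intervalIntegral.integral_mul_const,
      intervalIntegral.integral_add hxint intervalIntegrable_const,
      intervalIntegral.integral_const]
    congr 2
    simp [hs₀def]; all_goals ring
  rw [hsplit] at hmono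
  have hX : ∫ s in s₀..t, x s ≤ X := by
    have := hXint s₀ hs₀t₀; rwa [hs₀r] at this
  have hfinal : r * x t ≤ (X + r * B) * Real.exp A := by
    calc r * x t ≤ ((∫ s in s₀..t, x s) + r * B) * Real.exp A := hmono
      _ ≤ (X + r * B) * Real.exp A := by
          apply mul_le_mul_of_nonneg_right (by linarith) (Real.exp_pos _).le
  
  have heq : (X / r + B) * Real.exp A = ((X + r * B) * Real.exp A) / r := by
    field_simp
  rw [heq]
  rw [le_div_iff₀ hr]
  linarith
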